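/- Let U ⊆ ℝ^M be a nonempty set and let g : ℝ^M → ℝ be quasiconvex on conv(U). Then the supremum of g over conv(U) equals the supremum of g over U, i.e., sSup (g '' conv(U)) = sSup (g '' U) (the two image sets have exactly the same upper bounds, so in particular one is bounded above if and only if the other is). -/

import Mathlib

/-- For a quasiconvex function on `convexHull ℝ U`, the supremum of `g` over
`convexHull ℝ U` equals the supremum over `U`: the two image sets have exactly the same
upper bounds, hence the same `sSup`, and one is bounded above iff the other is. -/
theorem sSup_image_convexHull_eq_of_quasiconvexOn
    (M : ℕ) (U : Set (Fin M → ℝ)) (hU : U.Nonempty)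
    (g : (Fin M → ℝ) → ℝ) (hg : QuasiconvexOn ℝ (convexHull ℝ U) g) :
    upperBounds (g '' convexHull ℝ U) = upperBounds (g '' U) ∧
    sSup (g '' convexHull ℝ U) = sSup (g '' U) ∧
    (BddAbove (g '' convexHull ℝ U) ↔ BddAbove (g '' U)) := by
  have hub : upperBounds (g '' convexHull ℝ U) = upperBounds (g '' U) := by
    apply Set.Subset.antisymm
    · exact upperBounds_mono_set (Set.image_mono (f := g) (subset_convexHull ℝ U))
    · intro b hb
      rintro y ⟨x, hx, rfl⟩
      have hsub : U ⊆ {x ∈ convexHull ℝ U | g x ≤ b} := by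
        intro u hu
        exact ⟨subset_convexHull ℝ U hu, hb ⟨u, hu, rfl⟩⟩
      have := convexHull_min hsub (hg b)
      exact (this hx).2
  refine ⟨hub, ?_, ?_⟩
  · by_cases hbdd : BddAbove (g '' U)
    · apply le_antisymm
      · have h1 : sSup (g '' U) ∈ upperBounds (g '' U) := fun y hy => le_csSup hbdd hy
        have h2 : sSup (g '' U) ∈ upperBounds (g '' convexHull ℝ U) := by rw [hub]; exact h1
        exact csSup_le ((hU.mono (subset_convexHull ℝ U)).image g) (fun y hy => h2 hy)
      · exact csSup_le_csSup
          ⟨hbdd.choose, by rw [hub]; exact hbdd.choose_spec⟩ (hU.image g)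
          (Set.image_mono (f := g) (subset_convexHull ℝ U))
    · rw [Real.sSup_of_not_bddAbove hbdd, Real.sSup_of_not_bddAbove]
      rw [BddAbove, hub]; exact hbdd
  · constructor
    · rintro ⟨b, hb⟩; exact ⟨b, hub ▸ hb⟩
    · rintro ⟨b, hb⟩; exact ⟨b, hub.symm ▸ hb⟩
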